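/- Let G be a group and let P, K₀, K be subgroups of G such that K ≤ K₀, every element of K₀ normalizes K (i.e. k₀kk₀⁻¹ ∈ K for all k₀ ∈ K₀ and k ∈ K), and G = P·K₀ (every g ∈ G can be written as g = p·k₀ with p ∈ P and k₀ ∈ K₀). Let (V, ρ) be a representation of P on a complex vector space V. Let W be the ℂ-subspace of functions f : G → V satisfying f(p·g) = ρ(p)(f(g)) for all p ∈ P and g ∈ G, and let W_K be the subspace of those f ∈ W that additionally satisfy f(g·k) = f(g) for all g ∈ G and k ∈ K. Let V₀ = {v ∈ V : ρ(p)v = v for every p ∈ P with p ∈ K}. Then there exists a ℂ-linear isomorphism between W_K and the space of all functions from the double coset space P\G/K to V₀. In particular, if P\G/K is finite and V₀ is finite-dimensional, then dim W_K = |P\G/K| · dim V₀. -/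

import Mathlib

/-- Let `G` be a group with subgroups `P`, `K₀`, `K` such that `K ≤ K₀`, every element of
`K₀` normalizes `K`, and `G = P·K₀`. Let `ρ` be a representation of `P` on a complex vector
space `V`. Let `W_K` be the space of functions `f : G → V` with `f(p·g) = ρ(p)(f(g))` and
`f(g·k) = f(g)`, and let `V₀` be the space of vectors fixed by every `p ∈ P ∩ K`. Then `W_K`
is ℂ-linearly isomorphic to the space of functions `P\G/K → V₀`; in particular, if `P\G/K`
is finite and `V₀` is finite-dimensional, `dim W_K = |P\G/K| · dim V₀`. -/
theorem stmt1 (G : Type*) [Group G] (P K₀ K : Subgroup G)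
    (hKK₀ : K ≤ K₀)
    (hnorm : ∀ k₀ ∈ K₀, ∀ k ∈ K, k₀ * k * k₀⁻¹ ∈ K)
    (hIwasawa : ∀ g : G, ∃ p ∈ P, ∃ k₀ ∈ K₀, g = p * k₀)
    (V : Type*) [AddCommGroup V] [Module ℂ V]
    (ρ : Representation ℂ P V)
    (W_K : Submodule ℂ (G → V))
    (hW_K : ∀ f : G → V, f ∈ W_K ↔
      ((∀ (p : P) (g : G), f ((p : G) * g) = ρ p (f g)) ∧
        ∀ (g : G) (k : K), f (g * (k : G)) = f g))
    (V₀ : Submodule ℂ V)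
    (hV₀ : ∀ v : V, v ∈ V₀ ↔ ∀ p : P, (p : G) ∈ K → ρ p v = v) :
    Nonempty (W_K ≃ₗ[ℂ] (DoubleCoset.Quotient (P : Set G) (K : Set G) → V₀)) ∧
      (Finite (DoubleCoset.Quotient (P : Set G) (K : Set G)) → FiniteDimensional ℂ V₀ →
        Module.finrank ℂ W_K =
          Nat.card (DoubleCoset.Quotient (P : Set G) (K : Set G)) * Module.finrank ℂ V₀) := by
  classical
  set Q := DoubleCoset.Quotient (P : Set G) (K : Set G) with hQ
  -- choose a representative of each double coset lying in K₀
  have hrep : ∀ q : Q, ∃ r : G, r ∈ K₀ ∧ DoubleCoset.mk P K r = q := by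
    intro q
    obtain ⟨p, hp, k₀, hk₀, hg⟩ := hIwasawa q.out
    refine ⟨k₀, hk₀, ?_⟩
    rw [← DoubleCoset.out_eq' P K q]
    rw [DoubleCoset.eq]
    exact ⟨p, hp, 1, K.one_mem, by rw [mul_one]; exact hg⟩
  choose r hrK₀ hrmk using hrep
  -- choose a decomposition g = p · r(⟦g⟧) · k for each g
  have hdec : ∀ g : G, ∃ p, p ∈ P ∧ ∃ k, k ∈ K ∧
      g = p * r (DoubleCoset.mk P K g) * k := by
    intro g
    have h := (DoubleCoset.eq (H := P) (K := K) (r (DoubleCoset.mk P K g)) g).mp (hrmk _)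
    obtain ⟨p, hp, k, hk, hgk⟩ := h
    exact ⟨p, hp, k, hk, hgk⟩
  choose pc hpcP kc hkcK hgeq using hdec
  -- key: independence of the decomposition, on vectors of V₀
  have key : ∀ (q : Q) (v : V), v ∈ V₀ → ∀ p₁ p₂ k₁ k₂ : G,
      ∀ hp₁ : p₁ ∈ P, ∀ hp₂ : p₂ ∈ P, k₁ ∈ K → k₂ ∈ K →
      p₁ * r q * k₁ = p₂ * r q * k₂ →
      ρ ⟨p₁, hp₁⟩ v = ρ ⟨p₂, hp₂⟩ v := by
    intro q v hv p₁ p₂ k₁ k₂ hp₁ hp₂ hk₁ hk₂ heq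
    have hc : p₂⁻¹ * p₁ = r q * (k₂ * k₁⁻¹) * (r q)⁻¹ := by
      have h1 : p₁ * (r q * k₁) = p₂ * (r q * k₂) := by
        rw [← mul_assoc, ← mul_assoc]; exact heq
      have h2 : p₂⁻¹ * p₁ * (r q * k₁) = r q * k₂ := by
        rw [mul_assoc p₂⁻¹, h1, ← mul_assoc, inv_mul_cancel, one_mul]
      calc p₂⁻¹ * p₁ = (r q * k₂) * (r q * k₁)⁻¹ := by rw [← h2]; group
        _ = r q * (k₂ * k₁⁻¹) * (r q)⁻¹ := by group
    have hcK : p₂⁻¹ * p₁ ∈ K := by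
      rw [hc]
      exact hnorm _ (hrK₀ q) _ (K.mul_mem hk₂ (K.inv_mem hk₁))
    have hcP : p₂⁻¹ * p₁ ∈ P := P.mul_mem (P.inv_mem hp₂) hp₁
    have hfix : ρ ⟨p₂⁻¹ * p₁, hcP⟩ v = v := (hV₀ v).mp hv _ hcK
    have : (⟨p₂, hp₂⟩ : P) * ⟨p₂⁻¹ * p₁, hcP⟩ = ⟨p₁, hp₁⟩ := by
      ext; simp [mul_assoc]
    calc ρ ⟨p₁, hp₁⟩ v = ρ ((⟨p₂, hp₂⟩ : P) * ⟨p₂⁻¹ * p₁, hcP⟩) v := by rw [this]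
      _ = ρ ⟨p₂, hp₂⟩ (ρ ⟨p₂⁻¹ * p₁, hcP⟩ v) := by rw [map_mul]; rfl
      _ = ρ ⟨p₂, hp₂⟩ v := by rw [hfix]
  -- the candidate inverse map
  set Ψf : (Q → V₀) → (G → V) :=
    fun h g => ρ ⟨pc g, hpcP g⟩ ((h (DoubleCoset.mk P K g) : V)) with hΨf
  have hΨmem : ∀ h : Q → V₀, Ψf h ∈ W_K := by
    intro h
    rw [hW_K]
    constructor
    · intro p g
      have hmk : DoubleCoset.mk P K ((p : G) * g) = DoubleCoset.mk P K g := by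
        rw [DoubleCoset.eq]
        exact ⟨(p : G)⁻¹, P.inv_mem p.2, 1, K.one_mem, by group⟩
      have hd1 : (p : G) * g = pc ((p : G) * g) * r (DoubleCoset.mk P K g) * kc ((p : G) * g) := by
        have := hgeq ((p : G) * g); rwa [hmk] at this
      have hd2 : (p : G) * g = ((p : G) * pc g) * r (DoubleCoset.mk P K g) * kc g := by
        rw [mul_assoc, mul_assoc, ← mul_assoc (pc g), ← hgeq g]
      have hk := key (DoubleCoset.mk P K g) (h (DoubleCoset.mk P K g)) (h _).2 _ _ _ _
        (hpcP _) (P.mul_mem p.2 (hpcP g)) (hkcK _) (hkcK g) (hd1.symm.trans hd2)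
      simp only [hΨf, hmk]
      rw [hk]
      have : (⟨(p : G) * pc g, P.mul_mem p.2 (hpcP g)⟩ : P) = p * ⟨pc g, hpcP g⟩ := rfl
      rw [this, map_mul]
      rfl
    · intro g k
      have hmk : DoubleCoset.mk P K (g * (k : G)) = DoubleCoset.mk P K g := by
        rw [DoubleCoset.eq]
        exact ⟨1, P.one_mem, (k : G)⁻¹, K.inv_mem k.2, by group⟩
      have hd1 : g * (k : G) = pc (g * (k : G)) * r (DoubleCoset.mk P K g) * kc (g * (k : G)) := by
        have := hgeq (g * (k : G)); rwa [hmk] at this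
      have hd2 : g * (k : G) = pc g * r (DoubleCoset.mk P K g) * (kc g * (k : G)) := by
        rw [← mul_assoc, ← hgeq g]
      have hk := key (DoubleCoset.mk P K g) (h (DoubleCoset.mk P K g)) (h _).2 _ _ _ _
        (hpcP _) (hpcP g) (hkcK _) (K.mul_mem (hkcK g) k.2) (hd1.symm.trans hd2)
      simp only [hΨf, hmk]
      rw [hk]
  -- Ψ as a linear map
  set Ψ : (Q → V₀) →ₗ[ℂ] W_K :=
    { toFun := fun h => ⟨Ψf h, hΨmem h⟩
      map_add' := by
        intro h₁ h₂
        ext g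
        simp [hΨf]
      map_smul' := by
        intro c h
        ext g
        simp [hΨf] } with hΨ
  -- evaluation at representatives recovers h
  have heval : ∀ (h : Q → V₀) (q : Q), Ψf h (r q) = h q := by
    intro h q
    have hd1 : r q = pc (r q) * r q * kc (r q) := by
      have := hgeq (r q); rwa [hrmk q] at this
    have hd2 : r q = 1 * r q * 1 := by group
    have hk := key q (h q) (h q).2 _ _ _ _ (hpcP (r q)) P.one_mem (hkcK (r q)) K.one_mem
      (hd1.symm.trans hd2)
    simp only [hΨf, hrmk q]
    rw [hk]
    have : (⟨(1 : G), P.one_mem⟩ : P) = 1 := rfl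
    rw [this, map_one]
    rfl
  have hbij : Function.Bijective Ψ := by
    constructor
    · intro h₁ h₂ he
      funext q
      have : Ψf h₁ (r q) = Ψf h₂ (r q) := by
        have := congrArg (fun x : W_K => (x : G → V) (r q)) he
        simpa [hΨ] using this
      rw [heval, heval] at this
      exact Subtype.ext this
    · rintro ⟨f, hf⟩
      obtain ⟨hf1, hf2⟩ := (hW_K f).mp hf
      -- f takes values in V₀ at the representatives
      have hfV₀ : ∀ q : Q, f (r q) ∈ V₀ := by
        intro q
        rw [hV₀]
        intro p hpK
        have hkK : (r q)⁻¹ * (p : G) * r q ∈ K := by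
          have := hnorm (r q)⁻¹ (K₀.inv_mem (hrK₀ q)) (p : G) hpK
          rwa [inv_inv] at this
        have : (p : G) * r q = r q * ((r q)⁻¹ * (p : G) * r q) := by group
        calc ρ p (f (r q)) = f ((p : G) * r q) := (hf1 p (r q)).symm
          _ = f (r q * ((r q)⁻¹ * (p : G) * r q)) := by rw [this]
          _ = f (r q) := hf2 (r q) ⟨_, hkK⟩
      refine ⟨fun q => ⟨f (r q), hfV₀ q⟩, ?_⟩
      apply Subtype.ext
      funext g
      show Ψf (fun q => ⟨f (r q), hfV₀ q⟩) g = f g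
      simp only [hΨf]
      calc ρ ⟨pc g, hpcP g⟩ (f (r (DoubleCoset.mk P K g)))
          = ρ ⟨pc g, hpcP g⟩ (f (r (DoubleCoset.mk P K g) * kc g)) := by
            rw [hf2 (r (DoubleCoset.mk P K g)) ⟨kc g, hkcK g⟩]
        _ = f (pc g * (r (DoubleCoset.mk P K g) * kc g)) := (hf1 ⟨pc g, hpcP g⟩ _).symm
        _ = f g := by rw [← mul_assoc, ← hgeq g]
  have e : W_K ≃ₗ[ℂ] (Q → V₀) := (LinearEquiv.ofBijective Ψ hbij).symm
  refine ⟨⟨e⟩, ?_⟩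
  intro hfin hfd
  haveI := Fintype.ofFinite Q
  rw [e.finrank_eq, Module.finrank_pi_fintype, Finset.sum_const, Nat.card_eq_fintype_card]
  simp [mul_comm]
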